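/- Let T be a computable tree (a partial order on ℕ whose order relation is decidable by a computable function, and in which the set of strict predecessors of every element is finite and linearly ordered) having at least one node with infinitely many children. Then T has a punctual presentation: there exists a partial order on ℕ whose order relation has primitive recursive characteristic function and which is isomorphic to T as a partial order. -/

import Mathlib

set_option linter.unusedVariables false

namespace PRCat

/-! ### Primitive recursion relative to an oracle -/

/-- The smallest class of total functions `ℕ^k → ℕ` (all arities `k`) containing the oracle
`g`, the constant zero function, the successor function and all coordinate projections, and
closed under composition and primitive recursion. -/
inductive OraclePR (g : ℕ → ℕ) : ∀ {n : ℕ}, (List.Vector ℕ n → ℕ) → Prop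
  | oracle : OraclePR g fun v : List.Vector ℕ 1 => g v.head
  | zero : OraclePR g fun _ : List.Vector ℕ 0 => 0
  | succ : OraclePR g fun v : List.Vector ℕ 1 => v.head.succ
  | get {n : ℕ} (i : Fin n) : OraclePR g fun v => v.get i
  | comp {m n : ℕ} {f : List.Vector ℕ n → ℕ} (gs : Fin n → List.Vector ℕ m → ℕ) :
      OraclePR g f → (∀ i, OraclePR g (gs i)) →
      OraclePR g fun v => f (List.Vector.ofFn fun i => gs i v)
  | prec {n : ℕ} {f : List.Vector ℕ n → ℕ} {h : List.Vector ℕ (n + 2) → ℕ} :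
      OraclePR g f → OraclePR g h →
      OraclePR g fun v : List.Vector ℕ (n + 1) =>
        v.head.rec (f v.tail) fun y IH => h (y ::ᵥ IH ::ᵥ v.tail)

/-- `f ≤_PR g` : the (unary) total function `f` is primitive recursive relative to `g`. -/
def PRle (f g : ℕ → ℕ) : Prop := OraclePR g fun v : List.Vector ℕ 1 => f v.head

/-- A total function is Δ⁰₂ if it is the pointwise limit of a total computable function. -/
def IsDelta2 (f : ℕ → ℕ) : Prop :=
  ∃ g : ℕ → ℕ → ℕ, Computable₂ g ∧ ∀ x, ∀ᶠ s in Filter.atTop, g x s = f x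

/-- A total function is Δ⁰₃ if it is a double pointwise limit of a total computable function,
all inner limits existing. -/
def IsDelta3 (f : ℕ → ℕ) : Prop :=
  ∃ g : ℕ → ℕ → ℕ → ℕ, Computable (fun p : ℕ × ℕ × ℕ => g p.1 p.2.1 p.2.2) ∧
    ∃ G : ℕ → ℕ → ℕ, (∀ x s, ∀ᶠ t in Filter.atTop, g x s t = G x s) ∧
      ∀ x, ∀ᶠ s in Filter.atTop, G x s = f x

/-- `IsDeltaN n f` for `n ∈ {1,2,3}` : `f` is a total Δ⁰ₙ function. -/
def IsDeltaN : ℕ → (ℕ → ℕ) → Prop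
  | 1, f => Computable f
  | 2, f => IsDelta2 f
  | 3, f => IsDelta3 f
  | _, _ => False

/-- `h ⊕ h'` : the join sending `2n` to `h n` and `2n + 1` to `h' n`. -/
def join (h h' : ℕ → ℕ) : ℕ → ℕ := fun n => if n % 2 = 0 then h (n / 2) else h' (n / 2)

/-! ### Trees as partial orders -/

/-- A tree on `ℕ` : a partial order in which the set of strict predecessors of every element
is finite and linearly ordered, given by the characteristic function of the order relation. -/
structure TOrd where
  le : ℕ → ℕ → Bool
  refl : ∀ a, le a a = true
  antisymm : ∀ a b, le a b = true → le b a = true → a = b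
  trans : ∀ a b c, le a b = true → le b c = true → le a c = true
  pred_finite : ∀ a, {b | le b a = true ∧ b ≠ a}.Finite
  pred_linear : ∀ a b c, le b a = true → le c a = true → le b c = true ∨ le c b = true

/-- A tree on `ℕ` is punctual if its order relation is primitive recursive. -/
def TOrd.Punctual (T : TOrd) : Prop := Primrec₂ T.le

/-- A tree on `ℕ` is computable if its order relation is computable. -/
def TOrd.Comp (T : TOrd) : Prop := Computable₂ T.le

/-- `h` is an isomorphism from `A` onto `B`. -/
def TOrd.Iso (A B : TOrd) (h : ℕ → ℕ) : Prop :=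
  Function.Bijective h ∧ ∀ a b, A.le a b = B.le (h a) (h b)

/-- The tree `T` is isomorphic, as a partial order, to the partially ordered type `P`. -/
def TOrd.IsoTo (T : TOrd) (P : Type) [LE P] : Prop :=
  ∃ f : ℕ → P, Function.Bijective f ∧ ∀ a b, (T.le a b = true ↔ f a ≤ f b)

/-- `c` is a child of `t` : `c` covers `t`. -/
def TOrd.Child (T : TOrd) (t c : ℕ) : Prop :=
  T.le t c = true ∧ t ≠ c ∧ ∀ z, T.le t z = true → T.le z c = true → z = t ∨ z = c

/-- `T` has finite height: a uniform finite bound on the cardinalities of its chains. -/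
def TOrd.FiniteHeight (T : TOrd) : Prop :=
  ∃ n : ℕ, ∀ s : Finset ℕ, (∀ a ∈ s, ∀ b ∈ s, T.le a b = true ∨ T.le b a = true) → s.card ≤ n

/-- `d ∈ prcat(T)` : for every punctual presentation `B` of `T` there is an isomorphism
`h : T → B` with `h ≤_PR d` and `h⁻¹ ≤_PR d`. -/
def TOrd.PrcatAt (T : TOrd) (d : ℕ → ℕ) : Prop :=
  ∀ B : TOrd, B.Punctual → (∃ h, T.Iso B h) →
    ∃ h h' : ℕ → ℕ, Function.LeftInverse h' h ∧ Function.RightInverse h' h ∧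
      T.Iso B h ∧ PRle h d ∧ PRle h' d

/-- `T` is computably categorical: between any two computable presentations of `T` there is a
computable isomorphism. -/
def TOrd.CompCategorical (T : TOrd) : Prop :=
  ∀ A B : TOrd, A.Comp → B.Comp → (∃ h, T.Iso A h) → (∃ h, T.Iso B h) →
    ∃ h : ℕ → ℕ, Computable h ∧ A.Iso B h

/-- `T` is punctually categorical: between any two punctual presentations of `T` there is an
isomorphism `h` with both `h` and `h⁻¹` primitive recursive. -/
def TOrd.PunctCategorical (T : TOrd) : Prop :=
  ∀ A B : TOrd, A.Punctual → B.Punctual → (∃ h, T.Iso A h) → (∃ h, T.Iso B h) →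
    ∃ h h' : ℕ → ℕ, Function.LeftInverse h' h ∧ Function.RightInverse h' h ∧
      A.Iso B h ∧ Primrec h ∧ Primrec h'

/-- The countably infinite star: a least element `none` all of whose children are the
elements `some n`, with no other strict relations. -/
def Star : Type := Option ℕ

instance : PartialOrder Star where
  le x y := x = none ∨ x = y
  le_refl _ := Or.inr rfl
  le_trans x y z h₁ h₂ := by
    rcases h₁ with h₁ | h₁
    · exact Or.inl h₁
    · rw [h₁]; exact h₂
  le_antisymm x y h₁ h₂ := by
    rcases h₁ with h₁ | h₁
    · rcases h₂ with h₂ | h₂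
      · rw [h₁, h₂]
      · rw [h₂, h₁]
    · exact h₁



namespace PTreeAux
open Nat.Partrec Nat.Partrec.Code

def cv (c : Code) (s a b : ℕ) : Bool := (evaln s c (Nat.pair a b)).isSome

def tb (c : Code) (s a b : ℕ) : Bool := decide (evaln s c (Nat.pair a b) = some 1)

def allB (p : ℕ → Bool) (L : List ℕ) : Bool := L.foldr (fun e acc => p e && acc) true

theorem allB_iff {p : ℕ → Bool} {L : List ℕ} : allB p L = true ↔ ∀ e ∈ L, p e = true := by
  induction L with
  | nil => simp [allB]
  | cons h t ih => simp [allB] at ih ⊢; aesop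

def ready (c : Code) (L : List ℕ) (n : ℕ) : Bool :=
  allB (fun e => e == 0 || (cv c L.length n (e-1) && cv c L.length (e-1) n)) L

def llc (c : Code) (t0 : ℕ) (L : List ℕ) (n : ℕ) : Bool :=
  allB (fun e => e == 0 ||
    ((tb c L.length (e-1) n == (tb c L.length (e-1) t0 || ((e-1) == t0))) &&
      (tb c L.length n (e-1) == false))) L

def lu (L : List ℕ) : ℕ :=
  (List.range (L.length+1)).foldr (fun m acc => if (m+1) ∈ L then acc else m) (L.length+1)

def rf (n : ℕ) : List ℕ → List ℕ
  | [] => []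
  | e :: t => if e = 0 then (n+1) :: t else e :: rf n t

def stepf (c : Code) (t0 : ℕ) (L : List ℕ) : List ℕ :=
  if L.length = 0 then [t0+1]
  else cond (ready c L (lu L))
    (cond (llc c t0 L (lu L) && decide ((0:ℕ) ∈ L))
      (rf (lu L) L ++ [0])
      (L ++ [lu L + 1]))
    (L ++ [0])

def st (c : Code) (t0 : ℕ) (s : ℕ) : List ℕ := Nat.rec [] (fun _ ih => stepf c t0 ih) s

theorem st_zero (c : Code) (t0 : ℕ) : st c t0 0 = [] := rfl
theorem st_succ (c : Code) (t0 : ℕ) (s : ℕ) : st c t0 (s+1) = stepf c t0 (st c t0 s) := rfl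

def ale (c : Code) (t0 : ℕ) (i j : ℕ) : Bool :=
  if i = j then true
  else
    if (st c t0 (max i j + 1)).getD i 0 = 0 then false
    else if (st c t0 (max i j + 1)).getD j 0 = 0 then
      (tb c (max i j + 1) ((st c t0 (max i j + 1)).getD i 0 - 1) t0 ||
        (((st c t0 (max i j + 1)).getD i 0 - 1) == t0))
    else tb c (max i j + 1) ((st c t0 (max i j + 1)).getD i 0 - 1)
          ((st c t0 (max i j + 1)).getD j 0 - 1)

section primrec
open Primrec

private theorem cv_prim (c : Code) : Primrec (fun q : ℕ × ℕ × ℕ => cv c q.1 q.2.1 q.2.2) :=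
  option_isSome.comp <| primrec_evaln.comp <|
    (Primrec.pair (Primrec.pair Primrec.fst (Primrec.const c))
      (Primrec₂.natPair.comp (Primrec.fst.comp Primrec.snd) (Primrec.snd.comp Primrec.snd)))

private theorem tb_prim (c : Code) : Primrec (fun q : ℕ × ℕ × ℕ => tb c q.1 q.2.1 q.2.2) :=
  Primrec.eq.decide.comp (primrec_evaln.comp <|
    (Primrec.pair (Primrec.pair Primrec.fst (Primrec.const c))
      (Primrec₂.natPair.comp (Primrec.fst.comp Primrec.snd) (Primrec.snd.comp Primrec.snd))))
    (Primrec.const (some 1))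

private theorem memB_prim : PrimrecRel (fun (x : ℕ) (L : List ℕ) => x ∈ L) := by
  have : Primrec₂ (fun (x : ℕ) (L : List ℕ) => decide (L.idxOf x < L.length)) :=
    Primrec.nat_lt.decide.comp (Primrec.list_idxOf.comp Primrec.fst Primrec.snd)
      (Primrec.list_length.comp Primrec.snd)
  exact Primrec₂.primrecRel (this.of_eq fun x L => by simp [List.idxOf_lt_length_iff])

private theorem ready_prim (c : Code) : Primrec₂ (fun L n => ready c L n) := by
  have h : Primrec₂ (fun (a : List ℕ × ℕ) (p : ℕ × Bool) =>
      ((p.1 == 0 || (cv c a.1.length a.2 (p.1-1) && cv c a.1.length (p.1-1) a.2)) && p.2)) := by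
    have hb : Primrec (fun (x : (List ℕ × ℕ) × ℕ × Bool) => x.2.1 == (0:ℕ)) :=
      Primrec.beq.comp (Primrec.fst.comp Primrec.snd) (Primrec.const 0)
    have hc1 : Primrec (fun (x : (List ℕ × ℕ) × ℕ × Bool) => cv c x.1.1.length x.1.2 (x.2.1-1)) :=
      (cv_prim c).comp <| Primrec.pair (Primrec.list_length.comp (Primrec.fst.comp Primrec.fst))
        (Primrec.pair (Primrec.snd.comp Primrec.fst)
          (Primrec.nat_sub.comp (Primrec.fst.comp Primrec.snd) (Primrec.const 1)))
    have hc2 : Primrec (fun (x : (List ℕ × ℕ) × ℕ × Bool) => cv c x.1.1.length (x.2.1-1) x.1.2) :=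
      (cv_prim c).comp <| Primrec.pair (Primrec.list_length.comp (Primrec.fst.comp Primrec.fst))
        (Primrec.pair (Primrec.nat_sub.comp (Primrec.fst.comp Primrec.snd) (Primrec.const 1))
          (Primrec.snd.comp Primrec.fst))
    exact Primrec.and.comp
      (Primrec.or.comp hb (Primrec.and.comp hc1 hc2)) (Primrec.snd.comp Primrec.snd)
  exact (Primrec.list_foldr (Primrec.fst : Primrec (fun a : List ℕ × ℕ => a.1))
    (Primrec.const true) h).to₂.of_eq fun L n => by simp [ready, allB]

private theorem llc_prim (c : Code) (t0 : ℕ) : Primrec₂ (fun L n => llc c t0 L n) := by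
  have h : Primrec₂ (fun (a : List ℕ × ℕ) (p : ℕ × Bool) =>
      ((p.1 == 0 ||
        ((tb c a.1.length (p.1-1) a.2 == (tb c a.1.length (p.1-1) t0 || ((p.1-1) == t0))) &&
          (tb c a.1.length a.2 (p.1-1) == false))) && p.2)) := by
    have hb : Primrec (fun (x : (List ℕ × ℕ) × ℕ × Bool) => x.2.1 == (0:ℕ)) :=
      Primrec.beq.comp (Primrec.fst.comp Primrec.snd) (Primrec.const 0)
    have len : Primrec (fun (x : (List ℕ × ℕ) × ℕ × Bool) => x.1.1.length) :=
      Primrec.list_length.comp (Primrec.fst.comp Primrec.fst)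
    have e1 : Primrec (fun (x : (List ℕ × ℕ) × ℕ × Bool) => x.2.1 - 1) :=
      Primrec.nat_sub.comp (Primrec.fst.comp Primrec.snd) (Primrec.const 1)
    have nn : Primrec (fun (x : (List ℕ × ℕ) × ℕ × Bool) => x.1.2) :=
      Primrec.snd.comp Primrec.fst
    have t1 : Primrec (fun (x : (List ℕ × ℕ) × ℕ × Bool) => tb c x.1.1.length (x.2.1-1) x.1.2) :=
      (tb_prim c).comp (Primrec.pair len (Primrec.pair e1 nn))
    have t2 : Primrec (fun (x : (List ℕ × ℕ) × ℕ × Bool) => tb c x.1.1.length (x.2.1-1) t0) :=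
      (tb_prim c).comp (Primrec.pair len (Primrec.pair e1 (Primrec.const t0)))
    have t3 : Primrec (fun (x : (List ℕ × ℕ) × ℕ × Bool) => tb c x.1.1.length x.1.2 (x.2.1-1)) :=
      (tb_prim c).comp (Primrec.pair len (Primrec.pair nn e1))
    have heq : Primrec (fun (x : (List ℕ × ℕ) × ℕ × Bool) => (x.2.1 - 1) == t0) :=
      Primrec.beq.comp e1 (Primrec.const t0)
    exact Primrec.and.comp
      (Primrec.or.comp hb (Primrec.and.comp
        (Primrec.beq.comp t1 (Primrec.or.comp t2 heq))
        (Primrec.beq.comp t3 (Primrec.const false))))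
      (Primrec.snd.comp Primrec.snd)
  exact (Primrec.list_foldr (Primrec.fst : Primrec (fun a : List ℕ × ℕ => a.1))
    (Primrec.const true) h).to₂.of_eq fun L n => by simp [llc, allB]

private theorem lu_prim : Primrec lu := by
  have h : Primrec₂ (fun (L : List ℕ) (p : ℕ × ℕ) => if (p.1+1) ∈ L then p.2 else p.1) := by
    refine Primrec.ite ?_ (Primrec.snd.comp Primrec.snd) (Primrec.fst.comp Primrec.snd)
    exact memB_prim.comp (Primrec.succ.comp (Primrec.fst.comp Primrec.snd)) Primrec.fst
  exact (Primrec.list_foldr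
    (Primrec.list_range.comp (Primrec.succ.comp Primrec.list_length))
    (Primrec.succ.comp Primrec.list_length) h).of_eq fun L => by simp [lu]

private theorem rf_prim : Primrec₂ rf := by
  have h : Primrec₂ (fun (a : ℕ) (q : ℕ × List ℕ × List ℕ) =>
      if q.1 = 0 then (a+1) :: q.2.1 else q.1 :: q.2.2) := by
    refine Primrec.ite (Primrec.eq.comp (Primrec.fst.comp Primrec.snd) (Primrec.const 0)) ?_ ?_
    · exact Primrec.list_cons.comp (Primrec.succ.comp Primrec.fst)
        (Primrec.fst.comp (Primrec.snd.comp Primrec.snd))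
    · exact Primrec.list_cons.comp (Primrec.fst.comp Primrec.snd)
        (Primrec.snd.comp (Primrec.snd.comp Primrec.snd))
  refine (Primrec.list_rec (Primrec.snd : Primrec (fun a : ℕ × List ℕ => a.2))
    (Primrec.const ([] : List ℕ)) (h.comp (Primrec.fst.comp Primrec.fst) Primrec.snd).to₂).to₂.of_eq
    fun n L => ?_
  induction L with
  | nil => rfl
  | cons e t ih => by_cases he : e = 0 <;> simp [rf, he, ih]

private theorem stepf_prim (c : Code) (t0 : ℕ) : Primrec (stepf c t0) := by
  have hlu : Primrec (fun L : List ℕ => lu L) := lu_prim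
  have hready : Primrec (fun L : List ℕ => ready c L (lu L)) :=
    (ready_prim c).comp Primrec.id hlu
  have hllc : Primrec (fun L : List ℕ => llc c t0 L (lu L) && decide ((0:ℕ) ∈ L)) :=
    Primrec.and.comp ((llc_prim c t0).comp Primrec.id hlu)
      (memB_prim.decide.comp (Primrec.const 0) Primrec.id)
  have hbr1 : Primrec (fun L : List ℕ => rf (lu L) L ++ [0]) :=
    Primrec.list_concat.comp (rf_prim.comp hlu Primrec.id) (Primrec.const 0)
  have hbr2 : Primrec (fun L : List ℕ => L ++ [lu L + 1]) :=
    Primrec.list_concat.comp Primrec.id (Primrec.succ.comp hlu)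
  have hbr3 : Primrec (fun L : List ℕ => L ++ [0]) :=
    Primrec.list_concat.comp Primrec.id (Primrec.const 0)
  exact Primrec.ite (Primrec.eq.comp Primrec.list_length (Primrec.const 0))
    (Primrec.const [t0+1])
    (Primrec.cond hready (Primrec.cond hllc hbr1 hbr2) hbr3)

private theorem st_prim (c : Code) (t0 : ℕ) : Primrec (st c t0) :=
  Primrec.nat_rec₁ [] (((stepf_prim c t0).comp Primrec.snd).to₂)

theorem ale_prim (c : Code) (t0 : ℕ) : Primrec₂ (ale c t0) := by
  have hk : Primrec (fun p : ℕ × ℕ => max p.1 p.2 + 1) :=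
    Primrec.succ.comp (Primrec.nat_max.comp Primrec.fst Primrec.snd)
  have hL : Primrec (fun p : ℕ × ℕ => st c t0 (max p.1 p.2 + 1)) := (st_prim c t0).comp hk
  have ha : Primrec (fun p : ℕ × ℕ => (st c t0 (max p.1 p.2 + 1)).getD p.1 0) :=
    (Primrec.list_getD 0).comp hL Primrec.fst
  have hb : Primrec (fun p : ℕ × ℕ => (st c t0 (max p.1 p.2 + 1)).getD p.2 0) :=
    (Primrec.list_getD 0).comp hL Primrec.snd
  have hm1 : Primrec (fun p : ℕ × ℕ =>
      tb c (max p.1 p.2 + 1) ((st c t0 (max p.1 p.2 + 1)).getD p.1 0 - 1) t0 ||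
        (((st c t0 (max p.1 p.2 + 1)).getD p.1 0 - 1) == t0)) := by
    have := (tb_prim c).comp (Primrec.pair hk
      (Primrec.pair (Primrec.nat_sub.comp ha (Primrec.const 1)) (Primrec.const t0)))
    exact Primrec.or.comp this
      (Primrec.beq.comp (Primrec.nat_sub.comp ha (Primrec.const 1)) (Primrec.const t0))
  have hm2 : Primrec (fun p : ℕ × ℕ =>
      tb c (max p.1 p.2 + 1) ((st c t0 (max p.1 p.2 + 1)).getD p.1 0 - 1)
        ((st c t0 (max p.1 p.2 + 1)).getD p.2 0 - 1)) :=
    (tb_prim c).comp (Primrec.pair hk (Primrec.pair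
      (Primrec.nat_sub.comp ha (Primrec.const 1)) (Primrec.nat_sub.comp hb (Primrec.const 1))))
  exact (Primrec.ite (Primrec.eq.comp Primrec.fst Primrec.snd) (Primrec.const true)
    (Primrec.ite (Primrec.eq.comp ha (Primrec.const 0)) (Primrec.const false)
      (Primrec.ite (Primrec.eq.comp hb (Primrec.const 0)) hm1 hm2))).to₂

end primrec

section facts
variable (c : Code) (t0 : ℕ)

theorem cv_mono {s s' a b : ℕ} (h : s ≤ s') (hc : cv c s a b = true) : cv c s' a b = true := by
  unfold cv at *
  obtain ⟨x, hx⟩ := Option.isSome_iff_exists.1 hc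
  exact Option.isSome_iff_exists.2 ⟨x, evaln_mono h hx⟩

theorem rf_length (n : ℕ) (L : List ℕ) : (rf n L).length = L.length := by
  induction L with
  | nil => rfl
  | cons e t ih => by_cases he : e = 0 <;> simp [rf, he, ih]

theorem rf_mem {n x : ℕ} {L : List ℕ} (h : x ∈ rf n L) : x ∈ L ∨ x = n + 1 := by
  induction L with
  | nil => simp [rf] at h
  | cons e t ih =>
    by_cases he : e = 0 <;> simp [rf, he] at h
    · rcases h with h | h
      · right; omega
      · left; simp [h]
    · rcases h with h | h
      · left; simp [h]
      · rcases ih h with h' | h'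
        · left; simp [h']
        · right; exact h'

theorem rf_spec (n : ℕ) {L : List ℕ} (h : (0:ℕ) ∈ L) :
    ∃ p < L.length, L.getD p 0 = 0 ∧ (∀ q < p, L.getD q 0 ≠ 0) ∧
      (rf n L).getD p 0 = n + 1 ∧ ∀ q, q ≠ p → (rf n L).getD q 0 = L.getD q 0 := by
  induction L with
  | nil => simp at h
  | cons e t ih =>
    by_cases he : e = 0
    · refine ⟨0, by simp, by simp [he], by omega, by simp [rf, he], ?_⟩
      intro q hq
      obtain ⟨q', rfl⟩ := Nat.exists_eq_succ_of_ne_zero hq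
      simp [rf, he]
    · have ht : (0:ℕ) ∈ t := by simpa [he, eq_comm] using h
      obtain ⟨p, hp, h1, h2, h3, h4⟩ := ih ht
      refine ⟨p+1, by simpa using hp, by simpa using h1, ?_, by simpa [rf, he] using h3, ?_⟩
      · intro q hq
        cases q with
        | zero => simpa using he
        | succ q' => simpa using h2 q' (by omega)
      · intro q hq
        cases q with
        | zero => simp [rf, he]
        | succ q' => simpa [rf, he] using h4 q' (by omega)

theorem st_one : st c t0 1 = [t0 + 1] := by
  rw [st_succ, st_zero, stepf]; simp

theorem st_length (s : ℕ) : (st c t0 s).length = s := by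
  induction s with
  | zero => rfl
  | succ s ih =>
    rw [st_succ, stepf]
    split_ifs with h
    · rw [ih] at h; simp [h]
    · cases hr : ready c (st c t0 s) (lu (st c t0 s)) <;>
        cases hl : (llc c t0 (st c t0 s) (lu (st c t0 s)) && decide ((0:ℕ) ∈ st c t0 s)) <;>
        simp [rf_length, ih]

theorem getD_ne_lt {s i : ℕ} (h : (st c t0 s).getD i 0 ≠ 0) : i < s := by
  by_contra hc
  rw [List.getD_eq_default] at h
  · exact h rfl
  · rw [st_length]; omega

theorem getD_mem {L : List ℕ} {i : ℕ} (h : L.getD i 0 ≠ 0) : L.getD i 0 ∈ L := by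
  rcases lt_or_ge i L.length with hl | hl
  · rw [List.getD_eq_getElem L 0 hl]; exact List.getElem_mem _
  · rw [List.getD_eq_default L 0 hl] at h; exact absurd rfl h

theorem mem_getD {L : List ℕ} {x : ℕ} (h : x ∈ L) : ∃ i, i < L.length ∧ L.getD i 0 = x := by
  obtain ⟨n, hn, hx⟩ := List.getElem_of_mem h
  exact ⟨n, hn, by rw [List.getD_eq_getElem L 0 hn, hx]⟩

theorem step_cases (s : ℕ) (hs : 1 ≤ s) :
    (ready c (st c t0 s) (lu (st c t0 s)) = false ∧ st c t0 (s+1) = st c t0 s ++ [0]) ∨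
    (ready c (st c t0 s) (lu (st c t0 s)) = true ∧
      llc c t0 (st c t0 s) (lu (st c t0 s)) = true ∧ (0:ℕ) ∈ st c t0 s ∧
      st c t0 (s+1) = rf (lu (st c t0 s)) (st c t0 s) ++ [0]) ∨
    (ready c (st c t0 s) (lu (st c t0 s)) = true ∧
      (llc c t0 (st c t0 s) (lu (st c t0 s)) && decide ((0:ℕ) ∈ st c t0 s)) = false ∧
      st c t0 (s+1) = st c t0 s ++ [lu (st c t0 s) + 1]) := by
  have hlen : ¬ (st c t0 s).length = 0 := by rw [st_length]; omega
  rw [st_succ, stepf, if_neg hlen]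
  cases hr : ready c (st c t0 s) (lu (st c t0 s))
  · exact Or.inl ⟨rfl, rfl⟩
  · cases hl : (llc c t0 (st c t0 s) (lu (st c t0 s)) && decide ((0:ℕ) ∈ st c t0 s))
    · exact Or.inr (Or.inr ⟨rfl, rfl, rfl⟩)
    · rw [Bool.and_eq_true, decide_eq_true_eq] at hl
      exact Or.inr (Or.inl ⟨rfl, hl.1, hl.2, rfl⟩)

theorem exists_unused (L : List ℕ) : ∃ m, m ≤ L.length ∧ (m+1) ∉ L := by
  by_contra hc
  push_neg at hc
  have hsub : (Finset.range (L.length + 1)).image (· + 1) ⊆ L.toFinset := by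
    intro x hx
    simp only [Finset.mem_image, Finset.mem_range] at hx
    obtain ⟨m, hm, rfl⟩ := hx
    exact List.mem_toFinset.2 (hc m (by omega))
  have h1 : ((Finset.range (L.length + 1)).image (· + 1)).card = L.length + 1 := by
    rw [Finset.card_image_of_injective _ (add_left_injective 1), Finset.card_range]
  have h2 := Finset.card_le_card hsub
  have h3 := List.toFinset_card_le L
  omega

theorem lu_spec (L : List ℕ) :
    lu L ≤ L.length ∧ (lu L + 1) ∉ L ∧ ∀ m < lu L, (m+1) ∈ L := by
  have key : ∀ (k init : ℕ),
      (let r := (List.range k).foldr (fun m acc => if (m+1) ∈ L then acc else m) init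
      ((∀ m < k, (m+1) ∈ L) ∧ r = init) ∨ (r < k ∧ (r+1) ∉ L ∧ ∀ m < r, (m+1) ∈ L)) := by
    intro k
    induction k with
    | zero => intro init; left; exact ⟨by omega, rfl⟩
    | succ k ih =>
      intro init
      rw [List.range_succ, List.foldr_append]
      simp only [List.foldr_cons, List.foldr_nil]
      rcases ih (if (k+1) ∈ L then init else k) with ⟨h1, h2⟩ | ⟨h1, h2, h3⟩
      · by_cases hk : (k+1) ∈ L
        · left
          refine ⟨fun m hm => ?_, by rw [h2, if_pos hk]⟩
          rcases Nat.lt_succ_iff_lt_or_eq.1 hm with h | h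
          · exact h1 m h
          · subst h; exact hk
        · right
          rw [h2, if_neg hk]
          exact ⟨by omega, hk, h1⟩
      · right; exact ⟨by omega, h2, h3⟩
  obtain ⟨m0, hm0, hm0'⟩ := exists_unused L
  rcases key (L.length + 1) (L.length + 1) with ⟨h1, _⟩ | ⟨h1, h2, h3⟩
  · exact absurd (h1 m0 (by omega)) hm0'
  · exact ⟨by unfold lu; omega, h2, h3⟩

theorem getD_snoc (L : List ℕ) (v i : ℕ) :
    (L ++ [v]).getD i 0 = if i < L.length then L.getD i 0 else if i = L.length then v else 0 := by
  split_ifs with h1 h2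
  · exact List.getD_append L [v] 0 i h1
  · subst h2
    rw [List.getD_append_right L [v] 0 _ (le_refl _)]
    simp
  · rw [List.getD_eq_default _ _ (by simp; omega)]

theorem step_diff {s i : ℕ} (hs : 1 ≤ s)
    (h : (st c t0 (s+1)).getD i 0 ≠ (st c t0 s).getD i 0) :
    (st c t0 s).getD i 0 = 0 ∧ (st c t0 (s+1)).getD i 0 = lu (st c t0 s) + 1 ∧
      ready c (st c t0 s) (lu (st c t0 s)) = true ∧
      ∀ j, j ≠ i → (st c t0 (s+1)).getD j 0 = (st c t0 s).getD j 0 := by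
  have hlen := st_length c t0 s
  rcases step_cases c t0 s hs with ⟨hr, he⟩ | ⟨hr, hl, hz, he⟩ | ⟨hr, hl, he⟩
  · exfalso
    apply h
    rw [he, getD_snoc]
    rcases Nat.lt_trichotomy i (st c t0 s).length with h' | h' | h'
    · rw [if_pos h']
    · rw [if_neg (by omega), if_pos h', List.getD_eq_default _ _ (by omega)]
    · rw [if_neg (by omega), if_neg (by omega), List.getD_eq_default _ _ (by omega)]
  · obtain ⟨p, hp, h1, h2, h3, h4⟩ := rf_spec (lu (st c t0 s)) hz
    have hrlen : (rf (lu (st c t0 s)) (st c t0 s)).length = s := by rw [rf_length, hlen]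
    have hgen : ∀ q, q ≠ p → (st c t0 (s+1)).getD q 0 = (st c t0 s).getD q 0 := by
      intro q hq
      rw [he, getD_snoc, hrlen]
      rcases Nat.lt_trichotomy q s with h' | h' | h'
      · rw [if_pos h']
        exact h4 q hq
      · rw [if_neg (by omega), if_pos h', List.getD_eq_default _ _ (by omega)]
      · rw [if_neg (by omega), if_neg (by omega), List.getD_eq_default _ _ (by omega)]
    have hip : i = p := by
      by_contra hip
      exact h (hgen i hip)
    subst hip
    refine ⟨h1, ?_, hr, hgen⟩
    rw [he, getD_snoc, hrlen, if_pos (by omega)]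
    exact h3
  · have hgen : ∀ q, q ≠ s → (st c t0 (s+1)).getD q 0 = (st c t0 s).getD q 0 := by
      intro q hq
      rw [he, getD_snoc, hlen]
      rcases Nat.lt_trichotomy q s with h' | h' | h'
      · rw [if_pos h']
      · exact absurd h' hq
      · rw [if_neg (by omega), if_neg (by omega), List.getD_eq_default _ _ (by omega)]
    have hi : i = s := by
      by_contra hi
      exact h (hgen i hi)
    subst hi
    refine ⟨List.getD_eq_default _ _ (by omega), ?_, hr, hgen⟩
    rw [he, getD_snoc, hlen, if_neg (by omega), if_pos rfl]

theorem stab_one {s i : ℕ} (h : (st c t0 s).getD i 0 ≠ 0) :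
    (st c t0 (s+1)).getD i 0 = (st c t0 s).getD i 0 := by
  rcases Nat.lt_or_ge s 1 with hs | hs
  · interval_cases s
    · simp [st_zero] at h
  · by_contra hne
    exact h (step_diff c t0 hs hne).1

theorem stab {s s' i : ℕ} (hss : s ≤ s') (h : (st c t0 s).getD i 0 ≠ 0) :
    (st c t0 s').getD i 0 = (st c t0 s).getD i 0 := by
  induction s' with
  | zero =>
    have h0 : s = 0 := by omega
    subst h0; rfl
  | succ s' ih =>
    rcases Nat.lt_or_ge s (s'+1) with hlt | hge
    · have ih' := ih (by omega)
      rw [stab_one c t0 (by rw [ih']; exact h), ih']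
    · have : s = s' + 1 := by omega
      subst this; rfl

theorem entry0 {s : ℕ} (hs : 1 ≤ s) : (st c t0 s).getD 0 0 = t0 + 1 := by
  have h1 : (st c t0 1).getD 0 0 = t0 + 1 := by rw [st_one]; rfl
  calc (st c t0 s).getD 0 0 = (st c t0 1).getD 0 0 := stab c t0 hs (by rw [h1]; omega)
  _ = t0 + 1 := h1

theorem distinct {s i j : ℕ} (hij : i ≠ j) (hi : (st c t0 s).getD i 0 ≠ 0) :
    (st c t0 s).getD i 0 ≠ (st c t0 s).getD j 0 := by
  induction s with
  | zero => simp [st_zero] at hi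
  | succ s ih =>
    rcases Nat.lt_or_ge s 1 with hs | hs
    · interval_cases s
      intro he
      have hi0 : i = 0 := by
        have := getD_ne_lt c t0 hi; omega
      subst hi0
      rw [st_one] at hi he
      have hj0 : j ≠ 0 := fun h => hij h.symm
      have hjd : ([t0+1] : List ℕ).getD j 0 = 0 := List.getD_eq_default _ _ (by simp; omega)
      rw [hjd] at he
      simp at he
    · by_cases hdi : (st c t0 (s+1)).getD i 0 = (st c t0 s).getD i 0
      · by_cases hdj : (st c t0 (s+1)).getD j 0 = (st c t0 s).getD j 0
        · rw [hdi, hdj]; exact ih (by rw [← hdi]; exact hi)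
        · obtain ⟨hj0, hjv, _, hrest⟩ := step_diff c t0 hs hdj
          have hri := hrest i (fun h => hij h)
          have hi' : (st c t0 s).getD i 0 ≠ 0 := by rw [← hri]; exact hi
          rw [hri, hjv]
          intro he
          exact (lu_spec (st c t0 s)).2.1 (he ▸ getD_mem hi')
      · obtain ⟨hi0, hiv, _, hrest⟩ := step_diff c t0 hs hdi
        have hdj : (st c t0 (s+1)).getD j 0 = (st c t0 s).getD j 0 := hrest j (fun h => hij h.symm)
        rw [hiv, hdj]
        intro he
        have : lu (st c t0 s) + 1 ∈ st c t0 s := by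
          rw [he]
          exact getD_mem (by omega)
        exact (lu_spec (st c t0 s)).2.1 this

theorem ready_iff {L : List ℕ} {n : ℕ} : ready c L n = true ↔
    ∀ e ∈ L, e ≠ 0 → cv c L.length n (e-1) = true ∧ cv c L.length (e-1) n = true := by
  rw [ready, allB_iff]
  constructor
  · intro h e he hne
    have := h e he
    rw [Bool.or_eq_true, Bool.and_eq_true] at this
    rcases this with h' | h'
    · exact absurd (by simpa using h') hne
    · exact h'
  · intro h e he
    rw [Bool.or_eq_true, Bool.and_eq_true]
    by_cases hne : e = 0
    · left; simpa using hne
    · right; exact h e he hne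

theorem llc_iff {L : List ℕ} {n : ℕ} : llc c t0 L n = true ↔
    ∀ e ∈ L, e ≠ 0 →
      (tb c L.length (e-1) n = (tb c L.length (e-1) t0 || ((e-1) == t0))) ∧
        tb c L.length n (e-1) = false := by
  rw [llc, allB_iff]
  constructor
  · intro h e he hne
    have := h e he
    rw [Bool.or_eq_true, Bool.and_eq_true] at this
    rcases this with h' | h'
    · exact absurd (by simpa using h') hne
    · constructor
      · simpa using h'.1
      · simpa using h'.2
  · intro h e he
    rw [Bool.or_eq_true, Bool.and_eq_true]
    by_cases hne : e = 0
    · left; simpa using hne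
    · right
      obtain ⟨h1, h2⟩ := h e he hne
      constructor
      · simpa using h1
      · simpa using h2

theorem conv {s i j : ℕ} (hij : i ≠ j) (hi : (st c t0 s).getD i 0 ≠ 0)
    (hj : (st c t0 s).getD j 0 ≠ 0) :
    cv c s ((st c t0 s).getD i 0 - 1) ((st c t0 s).getD j 0 - 1) = true := by
  induction s with
  | zero => simp [st_zero] at hi
  | succ s ih =>
    rcases Nat.lt_or_ge s 1 with hs | hs
    · interval_cases s
      exfalso
      have h1 := getD_ne_lt c t0 hi
      have h2 := getD_ne_lt c t0 hj
      omega
    · by_cases hdi : (st c t0 (s+1)).getD i 0 = (st c t0 s).getD i 0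
      · by_cases hdj : (st c t0 (s+1)).getD j 0 = (st c t0 s).getD j 0
        · rw [hdi, hdj]
          exact cv_mono c (by omega) (ih (by rw [← hdi]; exact hi) (by rw [← hdj]; exact hj))
        · obtain ⟨hj0, hjv, hready, hrest⟩ := step_diff c t0 hs hdj
          have hri := hrest i (fun h => hij h)
          have hi' : (st c t0 s).getD i 0 ≠ 0 := by rw [← hri]; exact hi
          have hmem : (st c t0 s).getD i 0 ∈ st c t0 s := getD_mem hi'
          have := ((ready_iff c).1 hready _ hmem hi').2
          rw [st_length] at this
          rw [hri, hjv]
          simpa using cv_mono c (Nat.le_succ s) this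
      · obtain ⟨hi0, hiv, hready, hrest⟩ := step_diff c t0 hs hdi
        have hdj : (st c t0 (s+1)).getD j 0 = (st c t0 s).getD j 0 := hrest j (fun h => hij h.symm)
        have hj' : (st c t0 s).getD j 0 ≠ 0 := by rw [← hdj]; exact hj
        have hmem : (st c t0 s).getD j 0 ∈ st c t0 s := getD_mem hj'
        have := ((ready_iff c).1 hready _ hmem hj').1
        rw [st_length] at this
        rw [hiv, hdj]
        simpa using cv_mono c (Nat.le_succ s) this

theorem conv2 {s i : ℕ} (hi : (st c t0 s).getD i 0 ≠ 0)
    (hne : (st c t0 s).getD i 0 - 1 ≠ t0) :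
    cv c s ((st c t0 s).getD i 0 - 1) t0 = true := by
  induction s with
  | zero => simp [st_zero] at hi
  | succ s ih =>
    rcases Nat.lt_or_ge s 1 with hs | hs
    · interval_cases s
      exfalso
      have h1 := getD_ne_lt c t0 hi
      have hi0 : i = 0 := by omega
      subst hi0
      rw [st_one] at hne
      simp at hne
    · by_cases hdi : (st c t0 (s+1)).getD i 0 = (st c t0 s).getD i 0
      · rw [hdi] at hne ⊢
        exact cv_mono c (by omega) (ih (by rw [← hdi]; exact hi) hne)
      · obtain ⟨hi0, hiv, hready, _⟩ := step_diff c t0 hs hdi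
        have h0 : (st c t0 s).getD 0 0 = t0 + 1 := entry0 c t0 hs
        have hmem : (st c t0 s).getD 0 0 ∈ st c t0 s := getD_mem (by omega)
        have := ((ready_iff c).1 hready _ hmem (by omega)).1
        rw [st_length, h0] at this
        rw [hiv]
        simpa using cv_mono c (Nat.le_succ s) this

end facts

section sem
variable (T : TOrd) (c : Code) (t0 : ℕ)

theorem tb_eq (hc : ∀ a b : ℕ, eval c (Nat.pair a b) = Part.some (Encodable.encode (T.le a b)))
    {s a b : ℕ} (h : cv c s a b = true) : tb c s a b = T.le a b := by
  unfold cv at h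
  obtain ⟨x, hx⟩ := Option.isSome_iff_exists.1 h
  have hev : x ∈ eval c (Nat.pair a b) := evaln_sound hx
  rw [hc] at hev
  have hxe : x = Encodable.encode (T.le a b) := Part.mem_some_iff.1 hev
  unfold tb
  rw [hx, hxe]
  cases hT : T.le a b <;> rfl

theorem cv_total (hc : ∀ a b : ℕ, eval c (Nat.pair a b) = Part.some (Encodable.encode (T.le a b)))
    (a b : ℕ) : ∃ s, cv c s a b = true := by
  have : Encodable.encode (T.le a b) ∈ eval c (Nat.pair a b) := by
    rw [hc]; exact Part.mem_some _
  obtain ⟨k, hk⟩ := evaln_complete.1 this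
  exact ⟨k, Option.isSome_iff_exists.2 ⟨_, hk⟩⟩

theorem list_cv_bound (hc : ∀ a b : ℕ, eval c (Nat.pair a b) = Part.some (Encodable.encode (T.le a b)))
    (L : List ℕ) (n : ℕ) :
    ∃ S, ∀ e ∈ L, e ≠ 0 → cv c S n (e-1) = true ∧ cv c S (e-1) n = true := by
  induction L with
  | nil => exact ⟨0, by simp⟩
  | cons a L ihL =>
    obtain ⟨S1, hS1⟩ := ihL
    obtain ⟨S2, hS2⟩ := cv_total T c hc n (a-1)
    obtain ⟨S3, hS3⟩ := cv_total T c hc (a-1) n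
    refine ⟨max S1 (max S2 S3), ?_⟩
    intro e he hne
    rcases List.mem_cons.1 he with rfl | he'
    · exact ⟨cv_mono c (by omega) hS2, cv_mono c (by omega) hS3⟩
    · obtain ⟨h1, h2⟩ := hS1 e he' hne
      exact ⟨cv_mono c (by omega) h1, cv_mono c (by omega) h2⟩

theorem mem_mono {x s s' : ℕ} (hx : x ≠ 0) (h : x ∈ st c t0 s) (hss : s ≤ s') :
    x ∈ st c t0 s' := by
  obtain ⟨q, hq, hqe⟩ := mem_getD h
  have : (st c t0 s').getD q 0 = x := by
    rw [stab c t0 hss (by rw [hqe]; exact hx), hqe]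
  exact this ▸ getD_mem (by rw [this]; exact hx)

theorem zero_mem {s i : ℕ} (hi : i < s) (h : (st c t0 s).getD i 0 = 0) : (0:ℕ) ∈ st c t0 s := by
  have hl : i < (st c t0 s).length := by rw [st_length]; exact hi
  rw [List.getD_eq_getElem _ _ hl] at h
  exact h ▸ List.getElem_mem hl

theorem handled_all (hc : ∀ a b : ℕ, eval c (Nat.pair a b) = Part.some (Encodable.encode (T.le a b)))
    (n : ℕ) : ∃ s, (n+1) ∈ st c t0 s := by
  induction n using Nat.strong_induction_on with
  | _ n ih =>
  by_contra hcon
  push_neg at hcon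
  have key : ∀ k, k ≤ n → ∃ s0, ∀ m < k, (m+1) ∈ st c t0 s0 := by
    intro k
    induction k with
    | zero => exact fun _ => ⟨0, by omega⟩
    | succ k ihk =>
      intro hk
      obtain ⟨s1, hs1⟩ := ihk (by omega)
      obtain ⟨s2, hs2⟩ := ih k (by omega)
      refine ⟨max s1 s2, fun m hm => ?_⟩
      rcases Nat.lt_succ_iff_lt_or_eq.1 hm with h | h
      · exact mem_mono c t0 (by omega) (hs1 m h) (le_max_left _ _)
      · subst h; exact mem_mono c t0 (by omega) hs2 (le_max_right _ _)
  obtain ⟨s1, hs1⟩ := key n le_rfl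
  set s0 := max s1 (n+1) with hs0def
  have hs0n : n + 1 ≤ s0 := le_max_right _ _
  have hmem0 : ∀ m < n, (m+1) ∈ st c t0 s0 :=
    fun m hm => mem_mono c t0 (by omega) (hs1 m hm) (le_max_left _ _)
  have hlu : ∀ d, lu (st c t0 (s0 + d)) = n := by
    intro d
    have h1 : ∀ m < n, (m+1) ∈ st c t0 (s0+d) :=
      fun m hm => mem_mono c t0 (by omega) (hmem0 m hm) (by omega)
    have h2 : (n+1) ∉ st c t0 (s0+d) := hcon _
    obtain ⟨hle, hnm, hall⟩ := lu_spec (st c t0 (s0+d))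
    rcases Nat.lt_trichotomy (lu (st c t0 (s0+d))) n with h | h | h
    · exact absurd (h1 _ h) hnm
    · exact h
    · exact absurd (hall n h) h2
  have hnostep : ∀ s, 1 ≤ s → lu (st c t0 s) = n →
      ready c (st c t0 s) (lu (st c t0 s)) = false := by
    intro s hs hlus
    rcases step_cases c t0 s hs with ⟨hr, _⟩ | ⟨hr, hl, hz, he⟩ | ⟨hr, hl, he⟩
    · exact hr
    · exfalso
      apply hcon (s+1)
      obtain ⟨p, hp, h1, h2, h3, h4⟩ := rf_spec (lu (st c t0 s)) hz
      have : (st c t0 (s+1)).getD p 0 = n+1 := by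
        rw [he, List.getD_append _ _ _ _ (by rw [rf_length]; omega), h3, hlus]
      exact this ▸ getD_mem (by rw [this]; omega)
    · exfalso
      apply hcon (s+1)
      rw [he, hlus]
      exact List.mem_append.2 (Or.inr (by simp))
  obtain ⟨S, hS⟩ := list_cv_bound T c hc (st c t0 s0) n
  set s2 := s0 + (max S s0 - s0) with hs2def
  have hs2S : S ≤ s2 := by omega
  have hs2ge : 1 ≤ s2 := by omega
  have frozen : ∀ d, ∀ i', (st c t0 (s0 + d)).getD i' 0 =
      if i' < s0 then (st c t0 s0).getD i' 0 else 0 := by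
    intro d
    induction d with
    | zero =>
      intro i'
      split_ifs with h'
      · rfl
      · exact List.getD_eq_default _ _ (by rw [st_length]; omega)
    | succ d ihd =>
      intro i'
      have hsd : 1 ≤ s0 + d := by omega
      have hr := hnostep (s0+d) hsd (hlu d)
      rcases step_cases c t0 (s0+d) hsd with ⟨_, he⟩ | ⟨hr', _, _, _⟩ | ⟨hr', _, _⟩
      · have : s0 + (d+1) = (s0+d) + 1 := by omega
        rw [this, he, getD_snoc, st_length]
        rcases Nat.lt_trichotomy i' (s0+d) with h' | h' | h'
        · rw [if_pos h']; exact ihd i'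
        · rw [if_neg (by omega), if_pos h', if_neg (by omega)]
        · rw [if_neg (by omega), if_neg (by omega), if_neg (by omega)]
      · rw [hr] at hr'; exact absurd hr' (by simp)
      · rw [hr] at hr'; exact absurd hr' (by simp)
  have hready : ready c (st c t0 s2) n = true := by
    rw [ready_iff]
    intro e he hne
    obtain ⟨q, hq, hqe⟩ := mem_getD he
    have := frozen (max S s0 - s0) q
    rw [← hs2def, hqe] at this
    have hqs0 : q < s0 ∧ (st c t0 s0).getD q 0 = e := by
      by_cases h' : q < s0
      · exact ⟨h', by rw [this, if_pos h']⟩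
      · rw [if_neg h'] at this; exact absurd this hne
    have hes0 : e ∈ st c t0 s0 := hqs0.2 ▸ getD_mem (by rw [hqs0.2]; exact hne)
    obtain ⟨h1, h2⟩ := hS e hes0 hne
    rw [st_length]
    exact ⟨cv_mono c hs2S h1, cv_mono c hs2S h2⟩
  have := hnostep s2 hs2ge (hlu _)
  rw [hlu _] at this
  rw [hready] at this
  exact absurd this (by simp)

end sem

section tot
open scoped Classical
variable (T : TOrd) (c : Code) (t0 : ℕ)

def Touch (x s : ℕ) : Prop := ∃ e ∈ st c t0 s, e ≠ 0 ∧ T.le x (e-1) = true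

theorem child_eq {x x' : ℕ} (hx : T.Child t0 x) (hx' : T.Child t0 x') (h : T.le x x' = true) :
    x = x' := by
  rcases hx'.2.2 x hx.1 h with h1 | h1
  · exact absurd h1.symm hx.2.1
  · exact h1

theorem matched_all
    (hc : ∀ a b : ℕ, eval c (Nat.pair a b) = Part.some (Encodable.encode (T.le a b)))
    (hinf : {x | T.Child t0 x}.Infinite) (i : ℕ) :
    ∃ s, (st c t0 s).getD i 0 ≠ 0 := by
  by_contra hcon
  push_neg at hcon
  -- every child's cone is eventually touched
  have hTouchEx : ∀ x, ∃ s, Touch T c t0 x (s+1) := by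
    intro x
    obtain ⟨s, hs⟩ := handled_all T c t0 hc x
    cases s with
    | zero => simp [st_zero] at hs
    | succ s' => exact ⟨s', ⟨x+1, hs, by omega, by simpa using T.refl x⟩⟩
  set σ : ℕ → ℕ := fun x => Nat.find (hTouchEx x) with hσdef
  have hσ1 : ∀ x, Touch T c t0 x (σ x + 1) := fun x => Nat.find_spec (hTouchEx x)
  have hσ0 : ∀ x, ¬ Touch T c t0 x (σ x) := by
    intro x
    cases hs : σ x with
    | zero =>
      rintro ⟨e, he, -, -⟩
      simp [st_zero] at he
    | succ k =>
      have := Nat.find_min (hTouchEx x) (show k < σ x by omega)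
      exact this
  -- the event at stage σ x is a matching event
  have hev : ∀ x, T.Child t0 x →
      T.le x (lu (st c t0 (σ x))) = true ∧ 1 ≤ σ x ∧
      ready c (st c t0 (σ x)) (lu (st c t0 (σ x))) = true ∧
      llc c t0 (st c t0 (σ x)) (lu (st c t0 (σ x))) = true := by
    intro x hx
    obtain ⟨e, he, hne, hle⟩ := hσ1 x
    obtain ⟨q, hq, hqe⟩ := mem_getD he
    have hσpos : 1 ≤ σ x := by
      by_contra h0
      have h00 : σ x = 0 := by omega
      rw [h00, st_one] at he
      have he' : e = t0 + 1 := by simpa using he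
      rw [he'] at hle
      simp only [Nat.add_sub_cancel] at hle
      exact hx.2.1 (T.antisymm x t0 hle hx.1).symm
    have hdiff : (st c t0 (σ x + 1)).getD q 0 ≠ (st c t0 (σ x)).getD q 0 := by
      intro hsame
      apply hσ0 x
      refine ⟨e, ?_, hne, hle⟩
      have : (st c t0 (σ x)).getD q 0 = e := by rw [← hsame, hqe]
      exact this ▸ getD_mem (by rw [this]; exact hne)
    obtain ⟨h0, hval, hready, hrest⟩ := step_diff c t0 hσpos hdiff
    have heval : e = lu (st c t0 (σ x)) + 1 := by rw [← hqe, hval]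
    have hlex : T.le x (lu (st c t0 (σ x))) = true := by
      have : e - 1 = lu (st c t0 (σ x)) := by omega
      rw [← this]; exact hle
    refine ⟨hlex, hσpos, hready, ?_⟩
    rw [llc_iff]
    intro e' he' hne'
    have hxr : ¬ T.le x (e'-1) = true := fun h => hσ0 x ⟨e', he', hne', h⟩
    have hcv := (ready_iff c).1 hready e' he' hne'
    rw [st_length] at hcv
    have htb1 : tb c (σ x) (lu (st c t0 (σ x))) (e'-1) = T.le (lu (st c t0 (σ x))) (e'-1) :=
      tb_eq T c hc hcv.1
    have htb2 : tb c (σ x) (e'-1) (lu (st c t0 (σ x))) = T.le (e'-1) (lu (st c t0 (σ x))) :=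
      tb_eq T c hc hcv.2
    rw [st_length]
    constructor
    · by_cases hrt : e' - 1 = t0
      · have hto : T.le t0 (lu (st c t0 (σ x))) = true := T.trans _ _ _ hx.1 hlex
        rw [htb2, hrt, hto]
        simp
      · have hcv3 : cv c (σ x) (e'-1) t0 = true := by
          obtain ⟨q', hq', hq'e⟩ := mem_getD he'
          have := conv2 c t0 (s := σ x) (i := q') (by rw [hq'e]; exact hne')
            (by rw [hq'e]; exact hrt)
          rw [hq'e] at this
          exact this
        have htb3 : tb c (σ x) (e'-1) t0 = T.le (e'-1) t0 := tb_eq T c hc hcv3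
        rw [htb2, htb3]
        have hbeq : ((e' - 1 : ℕ) == t0) = false := by simp [hrt]
        rw [hbeq, Bool.or_false]
        by_cases h1 : T.le (e'-1) (lu (st c t0 (σ x))) = true
        · rw [h1]
          rcases T.pred_linear (lu (st c t0 (σ x))) (e'-1) x h1 hlex with h2 | h2
          · rcases T.pred_linear x (e'-1) t0 h2 hx.1 with h3 | h3
            · exact h3.symm
            · rcases hx.2.2 _ h3 h2 with h4 | h4
              · exact absurd h4 hrt
              · exact absurd (by rw [h4]; exact T.refl x) hxr
          · exact absurd h2 hxr
        · have h1' : T.le (e'-1) (lu (st c t0 (σ x))) = false := by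
            cases hb : T.le (e'-1) (lu (st c t0 (σ x)))
            · rfl
            · exact absurd hb h1
          rw [h1']
          cases hb : T.le (e'-1) t0
          · rfl
          · exact absurd (T.trans _ _ _ hb (T.trans _ _ _ hx.1 hlex)) h1
    · rw [htb1]
      cases hb : T.le (lu (st c t0 (σ x))) (e'-1)
      · rfl
      · exact absurd (T.trans _ _ _ hlex hb) hxr
  -- positions of matching events are injective and bounded by i
  set pos : ℕ → ℕ := fun s => Nat.find (⟨i, hcon s⟩ : ∃ q, (st c t0 s).getD q 0 = 0) with hposdef
  have hposle : ∀ s, pos s ≤ i := fun s => Nat.find_le (hcon s)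
  have hpos0 : ∀ s, (st c t0 s).getD (pos s) 0 = 0 :=
    fun s => Nat.find_spec (⟨i, hcon s⟩ : ∃ q, (st c t0 s).getD q 0 = 0)
  have hmatchstep : ∀ s, 1 ≤ s → ready c (st c t0 s) (lu (st c t0 s)) = true →
      llc c t0 (st c t0 s) (lu (st c t0 s)) = true → (0:ℕ) ∈ st c t0 s →
      (st c t0 (s+1)).getD (pos s) 0 ≠ 0 := by
    intro s hs hready hllc hmem
    rcases step_cases c t0 s hs with ⟨hr, _⟩ | ⟨_, _, _, he⟩ | ⟨_, hl, _⟩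
    · rw [hready] at hr; exact absurd hr (by simp)
    · obtain ⟨p, hp, h1, h2, h3, h4⟩ := rf_spec (lu (st c t0 s)) hmem
      have hpeq : p = pos s := by
        have hle1 : pos s ≤ p := Nat.find_le h1
        rcases Nat.lt_or_ge (pos s) p with hlt | hge
        · exact absurd (hpos0 s) (h2 _ hlt)
        · omega
      rw [← hpeq, he, List.getD_append _ _ _ _ (by rw [rf_length]; omega), h3]
      omega
    · rw [hllc] at hl
      simp [hmem] at hl
  -- σ is injective on children
  have hσinj : Set.InjOn σ {x | T.Child t0 x} := by
    intro x hx x' hx' heq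
    have h1 := (hev x hx).1
    have h2 := (hev x' hx').1
    rw [heq] at h1
    rcases T.pred_linear (lu (st c t0 (σ x'))) x x' h1 h2 with h3 | h3
    · exact child_eq T t0 hx hx' h3
    · exact (child_eq T t0 hx' hx h3).symm
  -- infinitely many children have σ > i
  have hsmallfin : Set.Finite {x | T.Child t0 x ∧ σ x ≤ i} := by
    apply Set.Finite.of_finite_image (f := σ)
    · apply Set.Finite.subset (Set.finite_Iic i)
      rintro y ⟨x, hx, rfl⟩
      exact hx.2
    · exact hσinj.mono (fun x hx => hx.1)
  have hbig : Set.Infinite ({x | T.Child t0 x} \ {x | T.Child t0 x ∧ σ x ≤ i}) :=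
    Set.Infinite.diff hinf hsmallfin
  obtain ⟨F, hFsub, hFcard⟩ := hbig.exists_subset_card_eq (i+2)
  have hFprop : ∀ x ∈ F, T.Child t0 x ∧ i < σ x := by
    intro x hxF
    have := hFsub hxF
    simp only [Set.mem_diff, Set.mem_setOf_eq] at this
    refine ⟨this.1, ?_⟩
    by_contra h
    exact this.2 ⟨this.1, by omega⟩
  set F' := F.image σ with hF'def
  have hF'card : F'.card = i + 2 := by
    rw [hF'def, Finset.card_image_of_injOn, hFcard]
    exact hσinj.mono (fun x hx => (hFprop x hx).1)
  have hF'prop : ∀ s ∈ F', i < s ∧ (st c t0 (s+1)).getD (pos s) 0 ≠ 0 := by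
    intro s hsF'
    obtain ⟨x, hxF, rfl⟩ := Finset.mem_image.1 hsF'
    obtain ⟨hch, hgt⟩ := hFprop x hxF
    obtain ⟨_, hσpos, hready, hllc⟩ := hev x hch
    have hmem : (0:ℕ) ∈ st c t0 (σ x) := zero_mem c t0 hgt (hcon (σ x))
    exact ⟨hgt, hmatchstep (σ x) hσpos hready hllc hmem⟩
  have hcard : F'.card ≤ (Finset.range (i+1)).card := by
    apply Finset.card_le_card_of_injOn pos
    · intro s hs
      simp only [Finset.coe_range, Set.mem_Iio]
      have := hposle s
      omega
    · intro s hs s' hs' hpp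
      by_contra hne
      have key : ∀ a b, a ∈ F' → b ∈ F' → a < b → pos a ≠ pos b := by
        intro a b ha hb hab
        have h1 := (hF'prop a ha).2
        have h2 := stab c t0 (show a + 1 ≤ b by omega) h1
        intro hppeq
        apply h1
        rw [← h2, hppeq]
        exact hpos0 b
      rcases Nat.lt_or_ge s s' with h | h
      · exact key s s' hs hs' h hpp
      · exact key s' s hs' hs (by omega) hpp.symm
  rw [Finset.card_range] at hcard
  omega

end tot

section main
open scoped Classical
variable (T : TOrd) (c : Code) (t0 : ℕ)

theorem main
    (hc : ∀ a b : ℕ, eval c (Nat.pair a b) = Part.some (Encodable.encode (T.le a b)))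
    (hinf : {x | T.Child t0 x}.Infinite) :
    ∃ ρ : ℕ → ℕ, Function.Bijective ρ ∧ ∀ i j, ale c t0 i j = T.le (ρ i) (ρ j) := by
  have hTOT : ∀ i, ∃ s, (st c t0 s).getD i 0 ≠ 0 := matched_all T c t0 hc hinf
  set ρ : ℕ → ℕ := fun i => (st c t0 (Classical.choose (hTOT i))).getD i 0 - 1 with hρdef
  have hρst : ∀ i s, (st c t0 s).getD i 0 ≠ 0 → (st c t0 s).getD i 0 = ρ i + 1 := by
    intro i s hs
    have h1 := Classical.choose_spec (hTOT i)
    have h2 := stab c t0 (le_max_left s (Classical.choose (hTOT i))) hs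
    have h3 := stab c t0 (le_max_right s (Classical.choose (hTOT i))) h1
    rw [h2] at h3
    show (st c t0 s).getD i 0 = (st c t0 (Classical.choose (hTOT i))).getD i 0 - 1 + 1
    omega
  have hρinj : Function.Injective ρ := by
    intro i j hij
    by_contra hne
    obtain ⟨si, hi⟩ := hTOT i
    obtain ⟨sj, hj⟩ := hTOT j
    have hi' := stab c t0 (le_max_left si sj) hi
    have hj' := stab c t0 (le_max_right si sj) hj
    have hi2 : (st c t0 (max si sj)).getD i 0 ≠ 0 := by rw [hi']; exact hi
    have hj2 : (st c t0 (max si sj)).getD j 0 ≠ 0 := by rw [hj']; exact hj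
    have := distinct c t0 hne hi2 (j := j)
    rw [hρst i _ hi2, hρst j _ hj2, hij] at this
    exact this rfl
  have hρsur : Function.Surjective ρ := by
    intro n
    obtain ⟨s, hs⟩ := handled_all T c t0 hc n
    obtain ⟨q, hq, hqe⟩ := mem_getD hs
    refine ⟨q, ?_⟩
    have := hρst q s (by rw [hqe]; omega)
    rw [hqe] at this
    omega
  -- matching structure for padded positions
  have hmatch : ∀ p k', (st c t0 k').getD p 0 = 0 → p < k' →
      ∃ m, k' ≤ m ∧ 1 ≤ m ∧ (st c t0 m).getD p 0 = 0 ∧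
        (st c t0 (m+1)).getD p 0 = lu (st c t0 m) + 1 ∧
        ready c (st c t0 m) (lu (st c t0 m)) = true ∧
        llc c t0 (st c t0 m) (lu (st c t0 m)) = true := by
    intro p k' h0 hpk
    have hex : ∃ m, (st c t0 (m+1)).getD p 0 ≠ 0 := by
      obtain ⟨s, hs⟩ := hTOT p
      cases s with
      | zero => rw [st_zero] at hs; simp at hs
      | succ s' => exact ⟨s', hs⟩
    set m := Nat.find hex with hmdef
    have hm1 : (st c t0 (m+1)).getD p 0 ≠ 0 := Nat.find_spec hex
    have hm0 : (st c t0 m).getD p 0 = 0 := by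
      cases hm : m with
      | zero => rw [st_zero]; simp
      | succ m' =>
        have hmin := Nat.find_min hex (show m' < m by omega)
        simpa using hmin
    have hmk : k' ≤ m := by
      by_contra hlt
      have h2 := stab c t0 (show m + 1 ≤ k' by omega) hm1
      rw [h0] at h2
      exact hm1 h2.symm
    have hm1le : 1 ≤ m := by omega
    have hdiff : (st c t0 (m+1)).getD p 0 ≠ (st c t0 m).getD p 0 := by
      rw [hm0]; exact hm1
    obtain ⟨_, hval, hready, _⟩ := step_diff c t0 hm1le hdiff
    refine ⟨m, hmk, hm1le, hm0, hval, hready, ?_⟩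
    rcases step_cases c t0 m hm1le with ⟨hr, _⟩ | ⟨_, hl, _, _⟩ | ⟨_, _, he⟩
    · rw [hready] at hr; exact absurd hr (by simp)
    · exact hl
    · exfalso
      apply hm1
      rw [he, getD_snoc, st_length, if_pos (by omega)]
      exact hm0
  -- roots of matched values
  have padroot : ∀ m, 1 ≤ m → ready c (st c t0 m) (lu (st c t0 m)) = true →
      llc c t0 (st c t0 m) (lu (st c t0 m)) = true →
      T.le t0 (lu (st c t0 m)) = true ∧ T.le (lu (st c t0 m)) t0 = false ∧
        lu (st c t0 m) ≠ t0 := by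
    intro m hm hready hllc
    have h0 : (st c t0 m).getD 0 0 = t0 + 1 := entry0 c t0 hm
    have he : (t0 + 1) ∈ st c t0 m := h0 ▸ getD_mem (by omega)
    have hl := (llc_iff c t0).1 hllc (t0+1) he (by omega)
    have hr := (ready_iff c).1 hready (t0+1) he (by omega)
    rw [st_length] at hl hr
    simp only [Nat.add_sub_cancel] at hl hr
    have htb1 : tb c m t0 (lu (st c t0 m)) = T.le t0 (lu (st c t0 m)) := tb_eq T c hc hr.2
    have htb2 : tb c m (lu (st c t0 m)) t0 = T.le (lu (st c t0 m)) t0 := tb_eq T c hc hr.1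
    have h1 : T.le t0 (lu (st c t0 m)) = true := by
      rw [← htb1, hl.1]
      simp
    have h2 : T.le (lu (st c t0 m)) t0 = false := by rw [← htb2, hl.2]
    refine ⟨h1, h2, ?_⟩
    intro hq
    rw [hq] at h2
    rw [T.refl t0] at h2
    simp at h2
  refine ⟨ρ, ⟨hρinj, hρsur⟩, ?_⟩
  intro i j
  by_cases hij : i = j
  · subst hij
    have h1 : ale c t0 i i = true := by unfold ale; rw [if_pos rfl]
    rw [h1, T.refl]
  · have hik : i < max i j + 1 := by omega
    have hjk : j < max i j + 1 := by omega
    have hale0 : ale c t0 i j = (if (st c t0 (max i j + 1)).getD i 0 = 0 then false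
        else if (st c t0 (max i j + 1)).getD j 0 = 0 then
          (tb c (max i j + 1) ((st c t0 (max i j + 1)).getD i 0 - 1) t0 ||
            (((st c t0 (max i j + 1)).getD i 0 - 1) == t0))
        else tb c (max i j + 1) ((st c t0 (max i j + 1)).getD i 0 - 1)
          ((st c t0 (max i j + 1)).getD j 0 - 1)) := by
      unfold ale; rw [if_neg hij]
    by_cases ha : (st c t0 (max i j + 1)).getD i 0 = 0
    · rw [if_pos ha] at hale0
      obtain ⟨m, hkm, hm1, hm0, hmv, hready, hllc⟩ := hmatch i (max i j + 1) ha hik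
      have hρi : ρ i = lu (st c t0 m) := by
        have := hρst i (m+1) (by rw [hmv]; omega)
        rw [hmv] at this
        omega
      by_cases hb : (st c t0 (max i j + 1)).getD j 0 = 0
      · -- both positions matched
        obtain ⟨m', hkm', hm1', hm0', hmv', hready', hllc'⟩ := hmatch j (max i j + 1) hb hjk
        have hρj : ρ j = lu (st c t0 m') := by
          have := hρst j (m'+1) (by rw [hmv']; omega)
          rw [hmv'] at this
          omega
        have hmm' : m ≠ m' := by
          intro he
          have hdiff : (st c t0 (m+1)).getD i 0 ≠ (st c t0 m).getD i 0 := by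
            rw [hmv, hm0]; omega
          obtain ⟨_, _, _, hrest⟩ := step_diff c t0 hm1 hdiff
          have h5 := hrest j (fun h => hij h.symm)
          rw [← he] at hm0' hmv'
          rw [hm0'] at h5
          rw [hmv'] at h5
          omega
        have hkey : ∀ mu mv (u : ℕ), mu < mv → 1 ≤ mu → 1 ≤ mv →
            (st c t0 (mu+1)).getD u 0 = lu (st c t0 mu) + 1 →
            ready c (st c t0 mu) (lu (st c t0 mu)) = true →
            llc c t0 (st c t0 mu) (lu (st c t0 mu)) = true →
            ready c (st c t0 mv) (lu (st c t0 mv)) = true →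
            llc c t0 (st c t0 mv) (lu (st c t0 mv)) = true →
            T.le (lu (st c t0 mu)) (lu (st c t0 mv)) = false ∧
              T.le (lu (st c t0 mv)) (lu (st c t0 mu)) = false := by
          intro mu mv u hmuv hmu1 hmv1 huv hreadyu hllcu hreadyv hllcv
          obtain ⟨hu1, hu2, hu3⟩ := padroot mu hmu1 hreadyu hllcu
          have hstabu : (st c t0 mv).getD u 0 = lu (st c t0 mu) + 1 := by
            rw [stab c t0 (show mu + 1 ≤ mv by omega) (by rw [huv]; omega), huv]
          have heu : (lu (st c t0 mu) + 1) ∈ st c t0 mv := hstabu ▸ getD_mem (by omega)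
          have hl := (llc_iff c t0).1 hllcv (lu (st c t0 mu) + 1) heu (by omega)
          have hr := (ready_iff c).1 hreadyv (lu (st c t0 mu) + 1) heu (by omega)
          rw [st_length] at hl hr
          simp only [Nat.add_sub_cancel] at hl hr
          have htb1 : tb c mv (lu (st c t0 mu)) (lu (st c t0 mv)) =
              T.le (lu (st c t0 mu)) (lu (st c t0 mv)) := tb_eq T c hc hr.2
          have htb2 : tb c mv (lu (st c t0 mv)) (lu (st c t0 mu)) =
              T.le (lu (st c t0 mv)) (lu (st c t0 mu)) := tb_eq T c hc hr.1
          constructor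
          · rw [← htb1, hl.1]
            have hcv3 : cv c mv (lu (st c t0 mu)) t0 = true := by
              have := conv2 c t0 (s := mv) (i := u) (by omega) (by omega)
              rw [hstabu] at this
              simpa using this
            have htb3 : tb c mv (lu (st c t0 mu)) t0 = T.le (lu (st c t0 mu)) t0 :=
              tb_eq T c hc hcv3
            rw [htb3, hu2]
            simp [hu3]
          · rw [← htb2, hl.2]
        rw [hale0, hρi, hρj]
        rcases Nat.lt_or_ge m m' with hlt | hge
        · exact (hkey m m' i hlt hm1 hm1' hmv hready hllc hready' hllc').1.symm
        · have hlt : m' < m := by omega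
          exact (hkey m' m j hlt hm1' hm1 hmv' hready' hllc' hready hllc).2.symm
      · -- i padded, j already assigned at stage k
        have hρj : ρ j = (st c t0 (max i j + 1)).getD j 0 - 1 := by
          have := hρst j (max i j + 1) hb
          omega
        have hstabj : (st c t0 m).getD j 0 = (st c t0 (max i j + 1)).getD j 0 :=
          stab c t0 hkm hb
        have hej : (st c t0 (max i j + 1)).getD j 0 ∈ st c t0 m := hstabj ▸ getD_mem (by rw [hstabj]; exact hb)
        have hl := (llc_iff c t0).1 hllc _ hej hb
        have hr := (ready_iff c).1 hready _ hej hb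
        rw [st_length] at hl hr
        have htb : tb c m (lu (st c t0 m)) ((st c t0 (max i j + 1)).getD j 0 - 1) =
            T.le (lu (st c t0 m)) ((st c t0 (max i j + 1)).getD j 0 - 1) := tb_eq T c hc hr.1
        rw [hale0, hρi, hρj, ← htb, hl.2]
    · rw [if_neg ha] at hale0
      have hρi : ρ i = (st c t0 (max i j + 1)).getD i 0 - 1 := by
        have := hρst i (max i j + 1) ha
        omega
      by_cases hb : (st c t0 (max i j + 1)).getD j 0 = 0
      · -- j padded, i assigned
        rw [if_pos hb] at hale0
        obtain ⟨m', hkm', hm1', hm0', hmv', hready', hllc'⟩ := hmatch j (max i j + 1) hb hjk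
        have hρj : ρ j = lu (st c t0 m') := by
          have := hρst j (m'+1) (by rw [hmv']; omega)
          rw [hmv'] at this
          omega
        obtain ⟨hp1, hp2, hp3⟩ := padroot m' hm1' hready' hllc'
        have hstabi : (st c t0 m').getD i 0 = (st c t0 (max i j + 1)).getD i 0 :=
          stab c t0 hkm' ha
        have hei : (st c t0 (max i j + 1)).getD i 0 ∈ st c t0 m' := hstabi ▸ getD_mem (by rw [hstabi]; exact ha)
        have hl := (llc_iff c t0).1 hllc' _ hei ha
        have hr := (ready_iff c).1 hready' _ hei ha
        rw [st_length] at hl hr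
        have htb1 : tb c m' ((st c t0 (max i j + 1)).getD i 0 - 1) (lu (st c t0 m')) =
            T.le ((st c t0 (max i j + 1)).getD i 0 - 1) (lu (st c t0 m')) := tb_eq T c hc hr.2
        rw [hale0, hρi, hρj, ← htb1, hl.1]
        by_cases hat : (st c t0 (max i j + 1)).getD i 0 - 1 = t0
        · rw [hat]
          have e1 : ((t0:ℕ) == t0) = true := by simp
          rw [e1]
          simp
        · have e1 : (((st c t0 (max i j + 1)).getD i 0 - 1) == t0) = false :=
            beq_eq_false_iff_ne.2 hat
          rw [e1, Bool.or_false, Bool.or_false]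
          have hcvk : cv c (max i j + 1) ((st c t0 (max i j + 1)).getD i 0 - 1) t0 = true :=
            conv2 c t0 ha hat
          have hcvm : cv c m' ((st c t0 (max i j + 1)).getD i 0 - 1) t0 = true := by
            have := conv2 c t0 (s := m') (i := i) (by rw [hstabi]; exact ha)
              (by rw [hstabi]; exact hat)
            rw [hstabi] at this
            exact this
          rw [tb_eq T c hc hcvk, tb_eq T c hc hcvm]
      · -- both assigned at stage k
        rw [if_neg hb] at hale0
        have hρj : ρ j = (st c t0 (max i j + 1)).getD j 0 - 1 := by
          have := hρst j (max i j + 1) hb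
          omega
        have hcv := conv c t0 hij ha hb
        rw [hale0, hρi, hρj, tb_eq T c hc hcv]

end main

end PTreeAux

/-- every computable tree with a node having infinitely many children has a
punctual presentation. -/
theorem punctual_presentation_of_computableTree (T : TOrd) (hcomp : T.Comp)
    (hnode : ∃ t : ℕ, {c | T.Child t c}.Infinite) :
    ∃ A : TOrd, A.Punctual ∧ ∃ h, T.Iso A h := by
  classical
  obtain ⟨t0, hinf⟩ := hnode
  have hcomp2 : Computable fun p : ℕ × ℕ => T.le p.1 p.2 := hcomp
  have hcomp' : Computable fun n : ℕ => Encodable.encode (T.le n.unpair.1 n.unpair.2) :=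
    Computable.encode.comp (hcomp2.comp Computable.unpair)
  have hpr : Nat.Partrec fun n : ℕ =>
      (Encodable.encode (T.le n.unpair.1 n.unpair.2) : ℕ) :=
    Partrec.nat_iff.1 hcomp'.partrec
  obtain ⟨c, hcc⟩ := Nat.Partrec.Code.exists_code.1 hpr
  have hc : ∀ a b : ℕ, Nat.Partrec.Code.eval c (Nat.pair a b) =
      Part.some (Encodable.encode (T.le a b)) := by
    intro a b
    rw [hcc]
    simp [Nat.unpair_pair]
  obtain ⟨ρ, hbij, hγ⟩ := PTreeAux.main T c t0 hc hinf
  let A : TOrd :=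
    { le := PTreeAux.ale c t0
      refl := fun a => by unfold PTreeAux.ale; rw [if_pos rfl]
      antisymm := fun a b h1 h2 => by
        rw [hγ] at h1 h2
        exact hbij.1 (T.antisymm _ _ h1 h2)
      trans := fun a b d h1 h2 => by
        rw [hγ] at h1 h2 ⊢
        exact T.trans _ _ _ h1 h2
      pred_finite := fun a => by
        have hsub : {b | PTreeAux.ale c t0 b a = true ∧ b ≠ a} ⊆
            ρ ⁻¹' {y | T.le y (ρ a) = true ∧ y ≠ ρ a} := by
          rintro b ⟨h1, h2⟩
          rw [hγ] at h1
          exact ⟨h1, fun he => h2 (hbij.1 he)⟩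
        exact Set.Finite.subset
          (Set.Finite.preimage hbij.1.injOn (T.pred_finite (ρ a))) hsub
      pred_linear := fun a b d h1 h2 => by
        rw [hγ] at h1 h2
        simp only [hγ]
        exact T.pred_linear _ _ _ h1 h2 }
  refine ⟨A, PTreeAux.ale_prim c t0, ?_⟩
  set e := Equiv.ofBijective ρ hbij with hedef
  refine ⟨e.symm, e.symm.bijective, ?_⟩
  intro a b
  have h1 : ρ (e.symm a) = a := e.apply_symm_apply a
  have h2 : ρ (e.symm b) = b := e.apply_symm_apply b
  show T.le a b = PTreeAux.ale c t0 (e.symm a) (e.symm b)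
  rw [hγ (e.symm a) (e.symm b), h1, h2]

end PRCat
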